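/- Let S be a Polish space and let c : S × S → [0,∞) satisfy: (a) c(x,x) = 0 for all x ∈ S; (b) c(x,z) ≤ c(x,y) + c(y,z) for all x, y, z ∈ S; (c) there exists a sequence of lower semicontinuous functions c_n : S × S → [0,∞) with c_n ↓ c pointwise as n → ∞. Then for all Borel probability measures μ, ν on S, sup{ ∫ φ dμ + ∫ ψ dν : φ, ψ : S → ℝ bounded Borel measurable with φ(x) + ψ(y) ≤ c(x,y) for all x, y ∈ S } = sup{ ∫ φ dμ − ∫ φ dν : φ : S → ℝ bounded Borel measurable with φ(x) − φ(y) ≤ c(x,y) for all x, y ∈ S }. -/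

import Mathlib

open MeasureTheory Set Filter Topology ENNReal NNReal


lemma tight_aux {S : Type*} [MetricSpace S] [CompleteSpace S]
    [SecondCountableTopology S] [MeasurableSpace S] [OpensMeasurableSpace S]
    (μ : Measure S) [IsFiniteMeasure μ] {ε : ℝ≥0∞} (hε : 0 < ε) :
    ∃ K : Set S, IsCompact K ∧ μ Kᶜ < ε := by
  rcases isEmpty_or_nonempty S with hS | hS
  · refine ⟨∅, isCompact_empty, ?_⟩
    rw [Set.compl_empty, Set.univ_eq_empty_iff.2 hS, measure_empty]
    exact hε
  · obtain ⟨u, hu⟩ := TopologicalSpace.exists_dense_seq S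
    obtain ⟨δ, hδpos, hδsum⟩ := ENNReal.exists_pos_sum_of_countable hε.ne' ℕ
    set W : ℕ → ℕ → Set S :=
      fun n k => ⋃ m ∈ Finset.range k, Metric.closedBall (u m) (1/(n+1)) with hW
    have hWclosed : ∀ n k, IsClosed (W n k) := fun n k =>
      isClosed_biUnion_finset (fun m _ => Metric.isClosed_closedBall)
    have hWanti : ∀ n, Antitone fun k => (W n k)ᶜ := by
      intro n k l hkl
      exact Set.compl_subset_compl.2
        (Set.biUnion_subset_biUnion_left (Finset.range_mono hkl))
    have hWiInter : ∀ n, ⋂ k, (W n k)ᶜ = ∅ := by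
      intro n
      rw [← Set.compl_iUnion, Set.compl_empty_iff]
      apply Set.eq_univ_of_forall
      intro x
      obtain ⟨m, hm⟩ := Metric.denseRange_iff.1 hu x (1/(n+1)) (by positivity)
      refine Set.mem_iUnion.2 ⟨m + 1, ?_⟩
      refine Set.mem_biUnion (Finset.self_mem_range_succ m) ?_
      exact Metric.mem_closedBall.2 hm.le
    have hsel : ∀ n : ℕ, ∃ k, μ ((W n k)ᶜ) < δ n := by
      intro n
      have htend : Tendsto (fun k => μ ((W n k)ᶜ)) atTop (𝓝 (μ (⋂ k, (W n k)ᶜ))) := by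
        refine tendsto_measure_iInter_atTop
          (fun k => ((hWclosed n k).measurableSet.compl).nullMeasurableSet)
          (hWanti n) ⟨0, measure_ne_top μ _⟩
      rw [hWiInter n, measure_empty] at htend
      have := (htend.eventually_lt_const (by exact_mod_cast (hδpos n) : (0:ℝ≥0∞) < δ n)).exists
      exact this
    choose k hk using hsel
    refine ⟨⋂ n, W n (k n), ?_, ?_⟩
    · apply TotallyBounded.isCompact_of_isClosed
      · rw [Metric.totallyBounded_iff]
        intro r hr
        obtain ⟨n, hn⟩ := exists_nat_one_div_lt hr
        refine ⟨u '' (Finset.range (k n) : Set ℕ), (Set.toFinite _).image u, ?_⟩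
        intro x hx
        have hx' : x ∈ W n (k n) := Set.mem_iInter.1 hx n
        obtain ⟨m, hm, hxm⟩ := Set.mem_iUnion₂.1 hx'
        refine Set.mem_biUnion ⟨m, by simpa using hm, rfl⟩ ?_
        exact Metric.closedBall_subset_ball (by exact_mod_cast hn) hxm
      · exact isClosed_iInter fun n => hWclosed n (k n)
    · rw [Set.compl_iInter]
      calc μ (⋃ n, (W n (k n))ᶜ) ≤ ∑' n, μ ((W n (k n))ᶜ) := measure_iUnion_le _
        _ ≤ ∑' n, (δ n : ℝ≥0∞) := ENNReal.tsum_le_tsum fun n => (hk n).le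
        _ < ε := hδsum

lemma lusin_aux {S : Type*} [TopologicalSpace S] [PolishSpace S] [MeasurableSpace S]
    [BorelSpace S] (μ : Measure S) [IsFiniteMeasure μ] {φ : S → ℝ} (hφ : Measurable φ)
    {ε : ℝ≥0∞} (hε : 0 < ε) :
    ∃ Z : Set S, IsCompact Z ∧ μ Zᶜ < ε ∧ ContinuousOn φ Z := by
  letI := TopologicalSpace.upgradeIsCompletelyMetrizable S
  obtain ⟨K₀, hK₀comp, hK₀μ⟩ := tight_aux μ (ENNReal.half_pos hε.ne' : (0:ℝ≥0∞) < ε/2)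
  obtain ⟨δ, hδpos, hδsum⟩ :=
    ENNReal.exists_pos_sum_of_countable (ENNReal.half_pos hε.ne').ne' (ℚ × ℚ)
  set A : ℚ × ℚ → Set S := fun i => φ ⁻¹' (Ioo (i.1 : ℝ) (i.2 : ℝ)) with hA
  have hAmeas : ∀ i, MeasurableSet (A i) := fun i => hφ measurableSet_Ioo
  have hhalf : ∀ i : ℚ × ℚ, ((δ i : ℝ≥0∞) / 2) ≠ 0 := by
    intro i
    simp [ENNReal.div_eq_zero_iff, (hδpos i).ne']
  have hC : ∀ i, ∃ F, F ⊆ A i ∧ IsClosed F ∧ μ (A i \ F) < (δ i : ℝ≥0∞) / 2 :=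
    fun i => (hAmeas i).exists_isClosed_diff_lt (measure_ne_top μ _) (hhalf i)
  have hD : ∀ i, ∃ F, F ⊆ (A i)ᶜ ∧ IsClosed F ∧ μ ((A i)ᶜ \ F) < (δ i : ℝ≥0∞) / 2 :=
    fun i => (hAmeas i).compl.exists_isClosed_diff_lt (measure_ne_top μ _) (hhalf i)
  choose C hCA hCclosed hCμ using hC
  choose D hDA hDclosed hDμ using hD
  refine ⟨K₀ ∩ ⋂ i, (C i ∪ D i), ?_, ?_, ?_⟩
  · exact hK₀comp.inter_right (isClosed_iInter fun i => (hCclosed i).union (hDclosed i))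
  · rw [Set.compl_inter, Set.compl_iInter]
    have hbad : ∀ i, μ ((C i ∪ D i)ᶜ) ≤ (δ i : ℝ≥0∞) := by
      intro i
      have hsub : (C i ∪ D i)ᶜ ⊆ (A i \ C i) ∪ ((A i)ᶜ \ D i) := by
        intro x hx
        rw [Set.mem_compl_iff, Set.mem_union, not_or] at hx
        by_cases hxA : x ∈ A i
        · exact Or.inl ⟨hxA, hx.1⟩
        · exact Or.inr ⟨hxA, hx.2⟩
      calc μ ((C i ∪ D i)ᶜ) ≤ μ ((A i \ C i) ∪ ((A i)ᶜ \ D i)) := measure_mono hsub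
        _ ≤ μ (A i \ C i) + μ ((A i)ᶜ \ D i) := measure_union_le _ _
        _ ≤ (δ i : ℝ≥0∞) / 2 + (δ i : ℝ≥0∞) / 2 := add_le_add (hCμ i).le (hDμ i).le
        _ = (δ i : ℝ≥0∞) := ENNReal.add_halves _
    calc μ (K₀ᶜ ∪ ⋃ i, (C i ∪ D i)ᶜ) ≤ μ K₀ᶜ + μ (⋃ i, (C i ∪ D i)ᶜ) := measure_union_le _ _
      _ ≤ μ K₀ᶜ + ∑' i, μ ((C i ∪ D i)ᶜ) := add_le_add le_rfl (measure_iUnion_le _)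
      _ ≤ μ K₀ᶜ + ∑' i, (δ i : ℝ≥0∞) := add_le_add le_rfl (ENNReal.tsum_le_tsum hbad)
      _ < ε / 2 + ε / 2 := ENNReal.add_lt_add hK₀μ hδsum
      _ = ε := ENNReal.add_halves _
  · intro x hx
    have hxZ : ∀ i, x ∈ C i ∪ D i := fun i => Set.mem_iInter.1 hx.2 i
    have key : ∀ p q : ℚ, (p : ℝ) < φ x → φ x < (q : ℝ) →
        ∀ᶠ y in 𝓝[K₀ ∩ ⋂ i, (C i ∪ D i)] x, φ y ∈ Ioo (p : ℝ) (q : ℝ) := by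
      intro p q hp hq
      have hxA : x ∈ A (p, q) := by simp [hA, hp, hq]
      have hxD : x ∉ D (p, q) := fun h => hDA (p, q) h hxA
      have hmem : (D (p, q))ᶜ ∈ 𝓝[K₀ ∩ ⋂ i, (C i ∪ D i)] x :=
        mem_nhdsWithin_of_mem_nhds ((hDclosed (p, q)).isOpen_compl.mem_nhds hxD)
      filter_upwards [hmem, self_mem_nhdsWithin] with y hyD hyZ
      have hyCD : y ∈ C (p, q) ∪ D (p, q) := Set.mem_iInter.1 hyZ.2 (p, q)
      have hyC : y ∈ C (p, q) := hyCD.resolve_right hyD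
      exact hCA (p, q) hyC
    apply tendsto_order.2
    constructor
    · intro a ha
      obtain ⟨p, hap, hpφ⟩ := exists_rat_btwn ha
      obtain ⟨q, hq⟩ := exists_rat_gt (φ x)
      filter_upwards [key p q hpφ hq] with y hy
      exact lt_trans hap hy.1
    · intro b hb
      obtain ⟨q, hφq, hqb⟩ := exists_rat_btwn hb
      obtain ⟨p, hp⟩ := exists_rat_lt (φ x)
      filter_upwards [key p q hp hφq] with y hy
      exact lt_trans hy.2 hqb

/-- Reduction of the Kantorovich dual problem to one dual variable, for cost functions
that are non-increasing pointwise limits of lower semicontinuous functions, vanish on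
the diagonal, and satisfy the triangle inequality. -/
theorem kantorovich_dual_one_variable
    {S : Type*} [TopologicalSpace S] [PolishSpace S] [MeasurableSpace S] [BorelSpace S]
    (c : S × S → ℝ) (hc0 : ∀ p, 0 ≤ c p)
    (hdiag : ∀ x : S, c (x, x) = 0)
    (htri : ∀ x y z : S, c (x, z) ≤ c (x, y) + c (y, z))
    (hseq : ∃ cn : ℕ → S × S → ℝ, (∀ n, LowerSemicontinuous (cn n)) ∧
      (∀ n p, 0 ≤ cn n p) ∧ (∀ p, Antitone fun n => cn n p) ∧
      (∀ p, Filter.Tendsto (fun n => cn n p) Filter.atTop (nhds (c p))))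
    (μ ν : Measure S) [IsProbabilityMeasure μ] [IsProbabilityMeasure ν] :
    (⨆ fp : {fp : (S → ℝ) × (S → ℝ) // Measurable fp.1 ∧ Measurable fp.2 ∧
        (∃ M : ℝ, ∀ x, |fp.1 x| ≤ M) ∧ (∃ M : ℝ, ∀ x, |fp.2 x| ≤ M) ∧
        ∀ x y : S, fp.1 x + fp.2 y ≤ c (x, y)},
      (∫ x, fp.1.1 x ∂μ + ∫ y, fp.1.2 y ∂ν)) =
    ⨆ φ : {φ : S → ℝ // Measurable φ ∧ (∃ M : ℝ, ∀ x, |φ x| ≤ M) ∧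
        ∀ x y : S, φ x - φ y ≤ c (x, y)},
      (∫ x, φ.1 x ∂μ - ∫ x, φ.1 x ∂ν) := by
  classical
  obtain ⟨cn, hlsc, hcn0, hanti, htend⟩ := hseq
  have hSne : Nonempty S := by
    by_contra h
    have h1 : μ Set.univ = 1 := measure_univ
    rw [Set.univ_eq_empty_iff.2 (not_nonempty_iff.1 h), measure_empty] at h1
    exact zero_ne_one h1
  have hccn : ∀ n p, c p ≤ cn n p := fun n p => (hanti p).le_of_tendsto (htend p) n
  set F1 : {fp : (S → ℝ) × (S → ℝ) // Measurable fp.1 ∧ Measurable fp.2 ∧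
        (∃ M : ℝ, ∀ x, |fp.1 x| ≤ M) ∧ (∃ M : ℝ, ∀ x, |fp.2 x| ≤ M) ∧
        ∀ x y : S, fp.1 x + fp.2 y ≤ c (x, y)} → ℝ :=
    fun fp => ∫ x, fp.1.1 x ∂μ + ∫ y, fp.1.2 y ∂ν with hF1
  set F2 : {φ : S → ℝ // Measurable φ ∧ (∃ M : ℝ, ∀ x, |φ x| ≤ M) ∧
        ∀ x y : S, φ x - φ y ≤ c (x, y)} → ℝ :=
    fun φ => ∫ x, φ.1 x ∂μ - ∫ x, φ.1 x ∂ν with hF2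
  have hemb : ∀ g, ∃ f, F1 f = F2 g := by
    rintro ⟨φ, hm, ⟨M, hM⟩, hlip⟩
    refine ⟨⟨(φ, fun x => -φ x), hm, hm.neg, ⟨M, hM⟩, ⟨M, fun x => by simpa using hM x⟩,
      fun x y => by dsimp only; linarith [hlip x y]⟩, ?_⟩
    simp only [hF1, hF2, integral_neg]
    ring
  haveI hne1 : Nonempty {fp : (S → ℝ) × (S → ℝ) // Measurable fp.1 ∧ Measurable fp.2 ∧
        (∃ M : ℝ, ∀ x, |fp.1 x| ≤ M) ∧ (∃ M : ℝ, ∀ x, |fp.2 x| ≤ M) ∧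
        ∀ x y : S, fp.1 x + fp.2 y ≤ c (x, y)} :=
    ⟨⟨(fun _ => 0, fun _ => 0), measurable_const, measurable_const,
      ⟨0, fun x => by simp⟩, ⟨0, fun x => by simp⟩,
      fun x y => by simpa using hc0 (x, y)⟩⟩
  haveI hne2 : Nonempty {φ : S → ℝ // Measurable φ ∧ (∃ M : ℝ, ∀ x, |φ x| ≤ M) ∧
        ∀ x y : S, φ x - φ y ≤ c (x, y)} :=
    ⟨⟨fun _ => 0, measurable_const, ⟨0, fun x => by simp⟩,
      fun x y => by simpa using hc0 (x, y)⟩⟩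
  have hkey : ∀ f, ∀ ε : ℝ, 0 < ε → ∃ g, F1 f - ε ≤ F2 g := by
    rintro ⟨⟨φ, ψ⟩, hφm', hψm', hMφ', hMψ', hadm'⟩ ε hε
    have hφm : Measurable φ := hφm'
    have hψm : Measurable ψ := hψm'
    obtain ⟨Mφ, hMφ⟩ := hMφ'
    obtain ⟨Mψ, hMψ⟩ := hMψ'
    have hadm : ∀ x y : S, φ x + ψ y ≤ c (x, y) := hadm'
    set M₀ : ℝ := max Mφ Mψ with hM₀def
    have hφb : ∀ x, |φ x| ≤ M₀ := fun x => (hMφ x).trans (le_max_left _ _)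
    have hψb : ∀ x, |ψ x| ≤ M₀ := fun x => (hMψ x).trans (le_max_right _ _)
    have hM₀ : 0 ≤ M₀ := le_trans (abs_nonneg _) (hφb hSne.some)
    set δR : ℝ := ε / (2 * M₀ + 1) with hδRdef
    have hδR : 0 < δR := div_pos hε (by linarith)
    obtain ⟨Z, hZcomp, hZμ, hZcont⟩ := lusin_aux μ hφm
      (lt_min (ENNReal.ofReal_pos.2 hδR) (by norm_num) :
        (0:ℝ≥0∞) < min (ENNReal.ofReal δR) (1/2))
    have hZclosed : IsClosed Z := hZcomp.isClosed
    have hZne : Z.Nonempty := by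
      rw [Set.nonempty_iff_ne_empty]
      intro h
      rw [h, Set.compl_empty] at hZμ
      have h1 : (1:ℝ≥0∞) < min (ENNReal.ofReal δR) (1/2) := measure_univ (μ := μ) ▸ hZμ
      have h2 := h1.trans_le (min_le_right _ _)
      norm_num at h2
    haveI := hZne.to_subtype
    haveI : CompactSpace ↥Z := isCompact_iff_compactSpace.1 hZcomp
    set T : ℕ → S → ℝ := fun n x => ⨆ z : Z, (φ ↑z - cn n (↑z, x)) with hT
    have hbddT : ∀ n x, BddAbove (Set.range fun z : Z => φ ↑z - cn n (↑z, x)) := by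
      intro n x
      refine ⟨M₀, ?_⟩
      rintro y ⟨z, rfl⟩
      have h1 := hcn0 n (↑z, x)
      have h2 := (abs_le.1 (hφb ↑z)).2
      dsimp only
      linarith
    have hTle : ∀ n x, T n x ≤ -ψ x := by
      intro n x
      refine ciSup_le fun z => ?_
      have h1 := hadm ↑z x
      have h2 := hccn n (↑z, x)
      linarith
    have hbddTn : ∀ x, BddAbove (Set.range fun n => T n x) := by
      intro x
      refine ⟨-ψ x, ?_⟩
      rintro y ⟨n, rfl⟩
      exact hTle n x
    set w : S → ℝ := fun x => ⨆ n, T n x with hw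
    have hTlew : ∀ n x, T n x ≤ w x := fun n x => le_ciSup (hbddTn x) n
    have hwle : ∀ x, w x ≤ -ψ x := fun x => ciSup_le fun n => hTle n x
    have hTmono : ∀ x, Monotone fun n => T n x := by
      intro x n m hnm
      refine ciSup_le fun z => le_trans ?_ (le_ciSup (hbddT m x) z)
      have h1 := hanti (↑z, x) hnm
      show φ ↑z - cn n (↑z, x) ≤ φ ↑z - cn m (↑z, x)
      linarith
    have htendw : ∀ x, Tendsto (fun n => T n x) atTop (𝓝 (w x)) :=
      fun x => tendsto_atTop_ciSup (hTmono x) (hbddTn x)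
    have hgen : ∀ z : S, z ∈ Z → ∀ x, φ z - c (z, x) ≤ w x := by
      intro z hz x
      have h1 : Tendsto (fun n => φ z - cn n (z, x)) atTop (𝓝 (φ z - c (z, x))) :=
        (htend (z, x)).const_sub _
      refine le_of_tendsto h1 (Filter.Eventually.of_forall fun n => ?_)
      exact le_trans (le_ciSup (hbddT n x) ⟨z, hz⟩) (hTlew n x)
    have hwφ : ∀ x ∈ Z, φ x ≤ w x := by
      intro x hx
      have h1 := hgen x hx x
      rw [hdiag x] at h1
      linarith
    have hwlip : ∀ x y, w x ≤ w y + c (x, y) := by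
      intro x y
      refine ciSup_le fun n => ciSup_le fun z => ?_
      have h1 := htri (↑z) x y
      have h2 := hgen (↑z) z.2 y
      have h3 := hccn n (↑z, x)
      linarith
    have hTmeas : ∀ n, Measurable (T n) := by
      intro n
      apply measurable_of_Iio
      intro a
      have hopen : IsOpen {x | T n x < a} := by
        rw [isOpen_iff_mem_nhds]
        intro x hx
        obtain ⟨a', ha'1, ha'2⟩ := exists_between (show T n x < a from hx)
        have hGopen : IsOpen {p : ↥Z × S | φ ↑p.1 - cn n (↑p.1, p.2) < a'} := by
          rw [isOpen_iff_mem_nhds]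
          rintro ⟨z, y⟩ hp
          simp only [Set.mem_setOf_eq] at hp
          obtain ⟨q, hq1, hq2⟩ := exists_between (show φ ↑z - a' < cn n (↑z, y) by linarith)
          have hc1 : Continuous fun p : ↥Z × S => φ ↑p.1 :=
            hZcont.restrict.comp continuous_fst
          have hU1 : IsOpen {p : ↥Z × S | φ ↑p.1 < q + a'} :=
            isOpen_lt hc1 continuous_const
          have hc2 : Continuous fun p : ↥Z × S => ((↑p.1, p.2) : S × S) :=
            (continuous_subtype_val.comp continuous_fst).prodMk continuous_snd
          have hU2 : IsOpen {p : ↥Z × S | q < cn n (↑p.1, p.2)} :=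
            ((lowerSemicontinuous_iff_isOpen_preimage.1 (hlsc n)) q).preimage hc2
          refine Filter.mem_of_superset ((hU1.inter hU2).mem_nhds ⟨?_, ?_⟩) ?_
          · simp only [Set.mem_setOf_eq]
            linarith
          · exact hq2
          · rintro ⟨z', y'⟩ ⟨h1, h2⟩
            simp only [Set.mem_setOf_eq] at h1 h2 ⊢
            linarith
        have hsub : (Set.univ : Set ↥Z) ×ˢ ({x} : Set S) ⊆
            {p : ↥Z × S | φ ↑p.1 - cn n (↑p.1, p.2) < a'} := by
          rintro ⟨z, y⟩ ⟨-, hy⟩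
          simp only [Set.mem_singleton_iff] at hy
          subst hy
          exact lt_of_le_of_lt (le_ciSup (hbddT n y) z) ha'1
        obtain ⟨u, v, hu, hv, hzu, hxv, huv⟩ :=
          generalized_tube_lemma isCompact_univ isCompact_singleton hGopen hsub
        refine Filter.mem_of_superset (hv.mem_nhds (hxv rfl)) ?_
        intro x' hx'
        have hle' : T n x' ≤ a' := by
          refine ciSup_le fun z => ?_
          have hmz : ((z, x') : ↥Z × S) ∈ u ×ˢ v :=
            Set.mem_prod.2 ⟨hzu (Set.mem_univ z), hx'⟩
          exact (huv hmz).le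
        exact lt_of_le_of_lt hle' ha'2
      exact hopen.measurableSet
    have hwmeas : Measurable w :=
      measurable_of_tendsto_metrizable hTmeas (tendsto_pi_nhds.2 htendw)
    set g : S → ℝ := fun x => max (w x) (-M₀) with hg
    have hgmeas : Measurable g := hwmeas.max measurable_const
    have hgψ : ∀ x, g x ≤ -ψ x := by
      intro x
      refine max_le (hwle x) ?_
      have h1 := (abs_le.1 (hψb x)).2
      linarith
    have hgb : ∀ x, |g x| ≤ M₀ := by
      intro x
      rw [abs_le]
      refine ⟨le_max_right _ _, max_le ?_ (by linarith)⟩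
      have h1 := (abs_le.1 (hψb x)).1
      have h2 := hwle x
      linarith
    have hglip : ∀ x y, g x - g y ≤ c (x, y) := by
      intro x y
      rw [sub_le_iff_le_add]
      refine max_le ?_ ?_
      · refine (hwlip x y).trans ?_
        have h1 := le_max_left (w y) (-M₀)
        linarith
      · have h1 := le_max_right (w y) (-M₀)
        have h2 := hc0 (x, y)
        linarith
    have hgZ : ∀ x ∈ Z, φ x ≤ g x := fun x hx => (hwφ x hx).trans (le_max_left _ _)
    have integ : ∀ (κ : Measure S), IsProbabilityMeasure κ → ∀ (h : S → ℝ), Measurable h →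
        (∀ x, |h x| ≤ M₀) → Integrable h κ := by
      intro κ hκ h hm hM
      haveI := hκ
      exact (integrable_const M₀).mono' hm.aestronglyMeasurable
        (Filter.Eventually.of_forall fun x => by rw [Real.norm_eq_abs]; exact hM x)
    have hφint : Integrable φ μ := integ μ inferInstance φ hφm hφb
    have hψint : Integrable ψ ν := integ ν inferInstance ψ hψm hψb
    have hgintμ : Integrable g μ := integ μ inferInstance g hgmeas hgb
    have hgintν : Integrable g ν := integ ν inferInstance g hgmeas hgb
    have hgν : ∫ x, g x ∂ν ≤ - ∫ x, ψ x ∂ν := by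
      rw [← integral_neg]
      exact integral_mono hgintν hψint.neg hgψ
    have hZmeas : MeasurableSet Z := hZclosed.measurableSet
    have hindint : Integrable (Zᶜ.indicator fun _ => 2 * M₀) μ :=
      (integrable_const (2 * M₀)).indicator hZmeas.compl
    have hgμ : ∫ x, φ x ∂μ - 2 * M₀ * (μ Zᶜ).toReal ≤ ∫ x, g x ∂μ := by
      have hpt : ∀ x, φ x - Zᶜ.indicator (fun _ => 2 * M₀) x ≤ g x := by
        intro x
        by_cases hx : x ∈ Z
        · rw [Set.indicator_of_notMem (by simpa using hx)]
          simpa using hgZ x hx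
        · rw [Set.indicator_of_mem (by simpa using hx)]
          have h1 := (abs_le.1 (hφb x)).2
          have h2 : -M₀ ≤ g x := le_max_right _ _
          linarith
      have h3 := integral_mono (hφint.sub hindint) hgintμ hpt
      simp only [Pi.sub_apply] at h3
      rwa [integral_sub hφint hindint, integral_indicator_const _ hZmeas.compl,
        smul_eq_mul, mul_comm] at h3
    have hμZc : (μ Zᶜ).toReal ≤ δR :=
      ENNReal.toReal_le_of_le_ofReal hδR.le (hZμ.le.trans (min_le_left _ _))
    have h2M : 2 * M₀ * (μ Zᶜ).toReal ≤ ε := by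
      have h1 : 2 * M₀ * (μ Zᶜ).toReal ≤ 2 * M₀ * δR :=
        mul_le_mul_of_nonneg_left hμZc (by linarith)
      have h2 : 2 * M₀ * δR ≤ (2 * M₀ + 1) * δR := by nlinarith
      have h3 : (2 * M₀ + 1) * δR = ε := by
        rw [hδRdef]
        field_simp
      linarith
    refine ⟨⟨g, hgmeas, ⟨M₀, hgb⟩, hglip⟩, ?_⟩
    show (∫ x, φ x ∂μ + ∫ y, ψ y ∂ν) - ε ≤ ∫ x, g x ∂μ - ∫ x, g x ∂ν
    linarith [hgμ, hgν, h2M]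

  have hle : ∀ f, BddAbove (Set.range F2) → F1 f ≤ ⨆ g, F2 g := by
    intro f hbdd
    refine le_of_forall_pos_le_add fun ε hε => ?_
    obtain ⟨g, hg⟩ := hkey f ε hε
    calc F1 f ≤ F2 g + ε := by linarith
      _ ≤ (⨆ g, F2 g) + ε := add_le_add (le_ciSup hbdd g) le_rfl
  by_cases hbdd : BddAbove (Set.range F2)
  · have hbdd1 : BddAbove (Set.range F1) := by
      refine ⟨⨆ g, F2 g, ?_⟩
      rintro y ⟨f, rfl⟩
      exact hle f hbdd
    apply le_antisymm
    · exact ciSup_le fun f => hle f hbdd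
    · refine ciSup_le fun g => ?_
      obtain ⟨f, hf⟩ := hemb g
      exact hf ▸ le_ciSup hbdd1 f
  · have hbdd1 : ¬ BddAbove (Set.range F1) := by
      rintro ⟨b, hb⟩
      refine hbdd ⟨b, ?_⟩
      rintro y ⟨g, rfl⟩
      obtain ⟨f, hf⟩ := hemb g
      exact hf ▸ hb ⟨f, rfl⟩
    rw [Real.iSup_of_not_bddAbove hbdd1, Real.iSup_of_not_bddAbove hbdd]
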